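/- Let m ≥ 1, let β_0, …, β_{m−1} be a basis of F_{2^m} over F_2, let ι : F_2 → F_{2^m} be the canonical inclusion (0 ↦ 0, 1 ↦ 1), and let j be a nonnegative integer. Define g : F_2^m → F_{2^m} by g(X_0, …, X_{m−1}) = (Σ_{s=0}^{m−1} ι(X_s) β_s)^j. Then g lies in the F_{2^m}-linear span of the monomial functions (X_0, …, X_{m−1}) ↦ ∏_{s ∈ E} ι(X_s), where E ranges over the subsets of {0, …, m−1} with |E| ≤ wt(j); that is, the j-th power function, expressed in the coordinates of the basis, is an F_{2^m}-linear combination of multilinear monomials of degree at most wt(j). -/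

import Mathlib

/-- The binary weight `wt j`: the number of ones in the binary expansion of `j`. -/
def wt (j : ℕ) : ℕ := (Nat.digits 2 j).sum

noncomputable def mono (m : ℕ) (E : Finset (Fin m)) : (Fin m → ZMod 2) → GaloisField 2 m :=
  fun X => ∏ s ∈ E, algebraMap (ZMod 2) (GaloisField 2 m) (X s)

noncomputable def Sk (m k : ℕ) :
    Submodule (GaloisField 2 m) ((Fin m → ZMod 2) → GaloisField 2 m) :=
  Submodule.span _ {h | ∃ E : Finset (Fin m), E.card ≤ k ∧ h = mono m E}

lemma idem (x : ZMod 2) :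
    algebraMap (ZMod 2) (GaloisField 2 m) x * algebraMap (ZMod 2) (GaloisField 2 m) x
      = algebraMap (ZMod 2) (GaloisField 2 m) x := by
  rw [← map_mul]
  congr 1
  revert x; decide

lemma mono_mul (m : ℕ) (E F : Finset (Fin m)) :
    mono m E * mono m F = mono m (E ∪ F) := by
  funext X
  simp only [Pi.mul_apply, mono]
  rw [← Finset.prod_union_inter]
  have h : E ∩ F ⊆ E ∪ F := (Finset.inter_subset_left).trans Finset.subset_union_left
  rw [← Finset.prod_sdiff h, mul_assoc, ← Finset.prod_mul_distrib]
  simp only [idem]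

lemma Sk_mono {m : ℕ} {a b : ℕ} (h : a ≤ b) : Sk m a ≤ Sk m b := by
  apply Submodule.span_mono
  rintro _ ⟨E, hE, rfl⟩
  exact ⟨E, hE.trans h, rfl⟩

lemma mul_mem_Sk {m a b : ℕ} {g h : (Fin m → ZMod 2) → GaloisField 2 m}
    (hg : g ∈ Sk m a) (hh : h ∈ Sk m b) : g * h ∈ Sk m (a + b) := by
  induction hg using Submodule.span_induction with
  | mem g hg =>
    obtain ⟨E, hE, rfl⟩ := hg
    induction hh using Submodule.span_induction with
    | mem h hh =>
      obtain ⟨F, hF, rfl⟩ := hh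
      rw [mono_mul]
      exact Submodule.subset_span ⟨E ∪ F, (Finset.card_union_le E F).trans (by omega), rfl⟩
    | zero => simpa using Submodule.zero_mem _
    | add x y hx hy px py => rw [mul_add]; exact Submodule.add_mem _ px py
    | smul c x hx px => rw [mul_smul_comm]; exact Submodule.smul_mem _ _ px
  | zero => simpa using Submodule.zero_mem _
  | add x y hx hy px py => rw [add_mul]; exact Submodule.add_mem _ px py
  | smul c x hx px => rw [smul_mul_assoc]; exact Submodule.smul_mem _ _ px

lemma sq_mem_Sk {m k : ℕ} {g : (Fin m → ZMod 2) → GaloisField 2 m}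
    (hg : g ∈ Sk m k) : g * g ∈ Sk m k := by
  induction hg using Submodule.span_induction with
  | mem g hg =>
    obtain ⟨E, hE, rfl⟩ := hg
    rw [mono_mul, Finset.union_self]
    exact Submodule.subset_span ⟨E, hE, rfl⟩
  | zero => simpa using Submodule.zero_mem _
  | add x y hx hy px py =>
    have h2 : ∀ z : (Fin m → ZMod 2) → GaloisField 2 m, z + z = 0 := by
      intro z; funext X
      exact CharTwo.add_self_eq_zero _
    have : (x + y) * (x + y) = x * x + y * y := by
      have := h2 (x*y)
      ring_nf
      linear_combination this
    rw [this]
    exact Submodule.add_mem _ px py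
  | smul c x hx px =>
    have : (c • x) * (c • x) = (c * c) • (x * x) := by
      rw [smul_mul_smul_comm]
    rw [this]
    exact Submodule.smul_mem _ _ px

/-- Let `β_0, …, β_{m−1}` be a basis of `F_{2^m}` over `F_2` and let
`g(X_0, …, X_{m−1}) = (∑_s ι(X_s)·β_s)^j`, where `ι : F_2 → F_{2^m}` is the canonical
inclusion. Then `g` lies in the `F_{2^m}`-linear span of the multilinear monomial
functions `X ↦ ∏_{s ∈ E} ι(X_s)` over subsets `E ⊆ {0, …, m−1}` with `|E| ≤ wt(j)`. -/
theorem power_function_in_span_of_low_degree_monomials {m : ℕ} (hm : 1 ≤ m)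
    (β : Module.Basis (Fin m) (ZMod 2) (GaloisField 2 m)) (j : ℕ) :
    (fun X : Fin m → ZMod 2 =>
        (∑ s : Fin m, algebraMap (ZMod 2) (GaloisField 2 m) (X s) * β s) ^ j) ∈
      Submodule.span (GaloisField 2 m)
        {h : (Fin m → ZMod 2) → GaloisField 2 m |
          ∃ E : Finset (Fin m), E.card ≤ wt j ∧
            h = fun X => ∏ s ∈ E, algebraMap (ZMod 2) (GaloisField 2 m) (X s)} := by
  set F : (Fin m → ZMod 2) → GaloisField 2 m :=
    fun X => ∑ s : Fin m, algebraMap (ZMod 2) (GaloisField 2 m) (X s) * β s with hF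
  have hsetsEq : ∀ k : ℕ,
      {h : (Fin m → ZMod 2) → GaloisField 2 m |
          ∃ E : Finset (Fin m), E.card ≤ k ∧
            h = fun X => ∏ s ∈ E, algebraMap (ZMod 2) (GaloisField 2 m) (X s)}
        = {h | ∃ E : Finset (Fin m), E.card ≤ k ∧ h = mono m E} := by
    intro k; rfl
  have hFmem : F ∈ Sk m 1 := by
    have : F = ∑ s : Fin m, β s • mono m {s} := by
      funext X
      simp [hF, mono, Finset.sum_apply, mul_comm, Algebra.smul_def]
    rw [this]
    exact Submodule.sum_mem _ fun s _ =>
      Submodule.smul_mem _ _ (Submodule.subset_span ⟨{s}, by simp, rfl⟩)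
  have key : ∀ j : ℕ, F ^ j ∈ Sk m (wt j) := by
    intro j
    induction j using Nat.strong_induction_on with
    | _ j ih =>
      rcases Nat.eq_zero_or_pos j with rfl | hj
      · rw [pow_zero]
        have h1 : (1 : (Fin m → ZMod 2) → GaloisField 2 m) = mono m ∅ := by
          funext X; simp [mono]
        rw [h1]
        exact Submodule.subset_span ⟨∅, by simp, rfl⟩
      · have hwt : wt j = j % 2 + wt (j / 2) := by
          unfold wt
          rw [Nat.digits_def' (by norm_num : 1 < 2) hj]
          simp
        have hq : F ^ (j / 2) ∈ Sk m (wt (j / 2)) :=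
          ih (j / 2) (Nat.div_lt_self hj (by norm_num))
        have hsq : F ^ (j / 2) * F ^ (j / 2) ∈ Sk m (wt (j / 2)) := sq_mem_Sk hq
        have hjeq : j = j / 2 + j / 2 + j % 2 := by omega
        have hsplit : F ^ j = F ^ (j / 2) * F ^ (j / 2) * F ^ (j % 2) := by
          rw [← pow_add, ← pow_add]
          exact congrArg (F ^ ·) (by omega)
        rcases Nat.mod_two_eq_zero_or_one j with h2 | h2
        · rw [hsplit, h2, pow_zero, mul_one]
          exact Sk_mono (by omega) hsq
        · rw [hsplit, h2, pow_one]
          exact Sk_mono (by omega) (mul_mem_Sk hsq hFmem)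
  have := key j
  rw [hsetsEq]
  exact this
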